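/- Let R be a field and x ∈ X. Then ℙ_{[x]} is irreducible for the family of operators {P_A, S_a, S_a*}: every nonzero submodule Y ⊆ ℙ_{[x]} invariant under all P_{Z_μ} (μ a finite word, Z_μ the cylinder of μ) and under all S_c S_d* (c, d finite words) equals ℙ_{[x]}. -/

import Mathlib

/-- The iterated shift: `shiftN x n = σⁿ(x)`. -/
def shiftN {A : Type*} (x : ℕ → A) (n : ℕ) : ℕ → A := fun k => x (k + n)

/-- Tail equivalence: `x ∼ y` iff `σⁿ(x) = σᵐ(y)` for some `n, m ∈ ℕ`. -/
def tailEq {A : Type*} (x y : ℕ → A) : Prop := ∃ n m : ℕ, shiftN x n = shiftN y m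

/-- Concatenation of a finite word with an infinite sequence. -/
def wcat {A : Type*} (w : List A) (x : ℕ → A) : ℕ → A :=
  fun n => if h : n < w.length then w.get ⟨n, h⟩ else x (n - w.length)

/-- The language of `X`: finite words appearing in some element of `X`. -/
def inLang {A : Type*} (X : Set (ℕ → A)) (w : List A) : Prop :=
  ∃ x ∈ X, ∃ k : ℕ, ∀ i (h : i < w.length), w.get ⟨i, h⟩ = x (k + i)

/-- The periodic infinite word `w^∞`. -/
def perInf {A : Type*} (w : List A) (h : w ≠ []) : ℕ → A :=
  fun n => w.get ⟨n % w.length, Nat.mod_lt n (List.length_pos_iff.mpr h)⟩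

/-- `q` is a line path in `X`. -/
def IsLinePath {A : Type*} (X : Set (ℕ → A)) (q : ℕ → A) : Prop :=
  q ∈ X ∧ {x | x ∈ X ∧ x 0 = q 0} = {q} ∧
    ∀ (β : List A) (hβ : β ≠ []) (k : ℕ), shiftN q k ≠ perInf β hβ


variable {A : Type*} (R : Type*) [Field R] (X : Set (ℕ → A))

open Classical

/-- Projection `P_B(δ_x) = [x ∈ B] δ_x` on the free module on `X`. -/
noncomputable def Pop (B : Set (ℕ → A)) : (↥X →₀ R) →ₗ[R] (↥X →₀ R) :=
  Finsupp.lsum R fun x => if (x : ℕ → A) ∈ B then Finsupp.lsingle x else 0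

/-- `S_a(δ_x) = [ax ∈ X] δ_{ax}`. -/
noncomputable def Sop (a : A) : (↥X →₀ R) →ₗ[R] (↥X →₀ R) :=
  Finsupp.lsum R fun x =>
    if h : wcat [a] (x : ℕ → A) ∈ X then Finsupp.lsingle (⟨wcat [a] (x : ℕ → A), h⟩ : ↥X) else 0

/-- `S_a^*(δ_x) = [x₀ = a] δ_{σ(x)}`, needing shift invariance of `X`. -/
noncomputable def SstarOp (hX : ∀ x ∈ X, shiftN x 1 ∈ X) (a : A) :
    (↥X →₀ R) →ₗ[R] (↥X →₀ R) :=
  Finsupp.lsum R fun x =>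
    if (x : ℕ → A) 0 = a then
      Finsupp.lsingle (⟨shiftN (x : ℕ → A) 1, hX x x.2⟩ : ↥X) else 0

/-- `S_α = S_{α₁} ∘ ⋯ ∘ S_{αₙ}`. -/
noncomputable def SwordOp (β : List A) : (↥X →₀ R) →ₗ[R] (↥X →₀ R) :=
  (β.map (Sop R X)).foldr (· ∘ₗ ·) LinearMap.id

/-- `S_α^* = S_{αₙ}^* ∘ ⋯ ∘ S_{α₁}^*`. -/
noncomputable def SstarWordOp (hX : ∀ x ∈ X, shiftN x 1 ∈ X) (α : List A) :
    (↥X →₀ R) →ₗ[R] (↥X →₀ R) :=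
  (α.map (SstarOp R X hX)).foldl (fun acc f => f ∘ₗ acc) LinearMap.id

/-- `C(α,β) = {βx ∈ X : αx ∈ X}`. -/
def Cset (α β : List A) : Set (ℕ → A) :=
  {y | ∃ x : ℕ → A, y = wcat β x ∧ wcat β x ∈ X ∧ wcat α x ∈ X}

/-- The cylinder `Z_μ`. -/
def Zcyl (μ : List A) : Set (ℕ → A) := {y | y ∈ X ∧ ∃ x : ℕ → A, y = wcat μ x}

/-- `ℙ_{[x]}`: the submodule spanned by `{δ_y : y ∼ x}`. -/
noncomputable def Pclass (x : ℕ → A) : Submodule R (↥X →₀ R) :=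
  Submodule.span R {f | ∃ y : ↥X, tailEq (y : ℕ → A) x ∧ f = Finsupp.single y (1 : R)}


def preW {A : Type*} (z : ℕ → A) (n : ℕ) : List A := List.ofFn (fun i : Fin n => z i)

lemma shiftN_add {A : Type*} (x : ℕ → A) (a b : ℕ) :
    shiftN (shiftN x a) b = shiftN x (a + b) := by
  funext k; simp [shiftN]; ring_nf

lemma shiftN_zero {A : Type*} (x : ℕ → A) : shiftN x 0 = x := rfl

lemma shiftN_mem (hX : ∀ x ∈ X, shiftN x 1 ∈ X) {x : ℕ → A} (hx : x ∈ X) (n : ℕ) :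
    shiftN x n ∈ X := by
  induction n with
  | zero => exact hx
  | succ n ih => rw [show n + 1 = n + 1 from rfl, ← shiftN_add]; exact hX _ ih

lemma wcat_preW {A : Type*} (z : ℕ → A) (n : ℕ) : wcat (preW z n) (shiftN z n) = z := by
  funext k
  simp only [wcat, preW, List.length_ofFn, List.get_ofFn, shiftN]
  split
  · rfl
  · next h => congr 1; omega

lemma single_congr {w1 w2 : ℕ → A} (h : w1 = w2) (h1 : w1 ∈ X) (h2 : w2 ∈ X) (r : R) :
    (Finsupp.single (⟨w1, h1⟩ : ↥X) r) = Finsupp.single ⟨w2, h2⟩ r := by subst h; rfl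

lemma Pop_single (B : Set (ℕ → A)) (y : ↥X) (r : R) :
    Pop R X B (Finsupp.single y r)
      = if (y : ℕ → A) ∈ B then Finsupp.single y r else 0 := by
  simp only [Pop, Finsupp.lsum_single]
  split <;> simp

lemma Sop_single (a : A) (y : ↥X) (r : R) :
    Sop R X a (Finsupp.single y r)
      = if h : wcat [a] (y : ℕ → A) ∈ X then
          Finsupp.single (⟨wcat [a] (y : ℕ → A), h⟩ : ↥X) r else 0 := by
  simp only [Sop, Finsupp.lsum_single]
  split <;> simp

lemma SstarOp_single (hX : ∀ x ∈ X, shiftN x 1 ∈ X) (a : A) (y : ↥X) (r : R) :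
    SstarOp R X hX a (Finsupp.single y r)
      = if (y : ℕ → A) 0 = a then
          Finsupp.single (⟨shiftN (y : ℕ → A) 1, hX y y.2⟩ : ↥X) r else 0 := by
  simp only [SstarOp, Finsupp.lsum_single]
  split <;> simp

lemma SstarWordOp_append (hX : ∀ x ∈ X, shiftN x 1 ∈ X) (α : List A) (a : A) :
    SstarWordOp R X hX (α ++ [a]) = SstarOp R X hX a ∘ₗ SstarWordOp R X hX α := by
  simp [SstarWordOp, List.map_append, List.foldl_append]

lemma SwordOp_cons (a : A) (β : List A) :
    SwordOp R X (a :: β) = Sop R X a ∘ₗ SwordOp R X β := rfl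

lemma SstarWord_preW (hX : ∀ x ∈ X, shiftN x 1 ∈ X) (z : ℕ → A) (hz : z ∈ X)
    (n : ℕ) (r : R) :
    SstarWordOp R X hX (preW z n) (Finsupp.single ⟨z, hz⟩ r)
      = Finsupp.single ⟨shiftN z n, shiftN_mem X hX hz n⟩ r := by
  induction n with
  | zero => exact single_congr R X (shiftN_zero z).symm hz _ r
  | succ n ih =>
    have hpre : preW z (n + 1) = preW z n ++ [z n] := by
      rw [preW, List.ofFn_succ', List.concat_eq_append]; rfl
    rw [hpre, SstarWordOp_append, LinearMap.comp_apply, ih, SstarOp_single]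
    rw [if_pos (by simp [shiftN])]
    exact single_congr R X (by rw [shiftN_add]) _ _ r

lemma wcat_head {A : Type*} (z : ℕ → A) : wcat [z 0] (shiftN z 1) = z := by
  funext k
  simp only [wcat, List.length_singleton, shiftN]
  split
  · next h => interval_cases k <;> simp
  · next h => congr 1; omega

lemma Sword_preW (hX : ∀ x ∈ X, shiftN x 1 ∈ X) :
    ∀ (m : ℕ) (z : ℕ → A) (hz : z ∈ X) (hm : shiftN z m ∈ X) (r : R),
    SwordOp R X (preW z m) (Finsupp.single ⟨shiftN z m, hm⟩ r)
      = Finsupp.single ⟨z, hz⟩ r := by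
  intro m
  induction m with
  | zero => intro z hz hm r; exact single_congr R X (shiftN_zero z) hm hz r
  | succ m ih =>
    intro z hz hm r
    have hpre : preW z (m + 1) = z 0 :: preW (shiftN z 1) m := by
      simp only [preW, List.ofFn_succ]
      congr 1
    have hsh : shiftN z (m + 1) = shiftN (shiftN z 1) m := by
      rw [shiftN_add, Nat.add_comm]
    have hm' : shiftN (shiftN z 1) m ∈ X := hsh ▸ hm
    rw [hpre, SwordOp_cons, LinearMap.comp_apply,
      single_congr R X hsh hm hm' r, ih (shiftN z 1) (hX z hz) hm' r, Sop_single]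
    have hc : wcat [z 0] (shiftN z 1) ∈ X := by rw [wcat_head]; exact hz
    rw [dif_pos hc]
    exact single_congr R X (wcat_head z) hc hz r

lemma Pclass_eq (x : ℕ → A) :
    Pclass R X x = Finsupp.supported R R {y : ↥X | tailEq (y : ℕ → A) x} := by
  rw [Finsupp.supported_eq_span_single, Pclass]
  congr 1
  ext f
  constructor
  · rintro ⟨y, hy, rfl⟩; exact ⟨y, hy, rfl⟩
  · rintro ⟨y, hy, rfl⟩; exact ⟨y, hy, rfl⟩


/-- over a field, every nonzero submodule of `ℙ_{[x]}` invariant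
under the cylinder projections `P_{Z_μ}` and the operators `S_c S_d^*` equals
`ℙ_{[x]}`. -/
theorem Pclass_irreducible {A : Type*} (R : Type*) [Field R]
    (X : Set (ℕ → A)) (hX : ∀ x ∈ X, shiftN x 1 ∈ X) (x : ℕ → A) (hx : x ∈ X)
    (Y : Submodule R (↥X →₀ R)) (hYle : Y ≤ Pclass R X x) (hYne : Y ≠ ⊥)
    (hP : ∀ μ : List A, ∀ v ∈ Y, Pop R X (Zcyl X μ) v ∈ Y)
    (hS : ∀ c d : List A, ∀ v ∈ Y, (SwordOp R X c ∘ₗ SstarWordOp R X hX d) v ∈ Y) :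
    Y = Pclass R X x := by
  refine le_antisymm hYle ?_
  obtain ⟨v, hvY, hv0⟩ := (Submodule.ne_bot_iff Y).mp hYne
  obtain ⟨y, hy⟩ := Finsupp.support_nonempty_iff.mpr hv0
  have hsupp : ∀ z ∈ v.support, tailEq (z : ℕ → A) x := by
    have hv := hYle hvY
    rw [Pclass_eq] at hv
    exact fun z hz => (Finsupp.mem_supported R v).mp hv hz
  set N := (v.support.erase y).sup
      (fun z => if h : ∃ k, (z : ℕ → A) k ≠ (y : ℕ → A) k then Nat.find h else 0) + 1 with hN
  set μ := preW (y : ℕ → A) N with hμ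
  have hyZ : (y : ℕ → A) ∈ Zcyl X μ :=
    ⟨y.2, shiftN (y : ℕ → A) N, (wcat_preW _ N).symm⟩
  have hsep : ∀ z ∈ v.support, z ≠ y → (z : ℕ → A) ∉ Zcyl X μ := by
    intro z hz hzy hmem
    obtain ⟨_, w, hw⟩ := hmem
    have hex : ∃ k, (z : ℕ → A) k ≠ (y : ℕ → A) k := by
      by_contra hc; push_neg at hc
      exact hzy (Subtype.ext (funext hc))
    have hk := Finset.le_sup (f := fun z : ↥X =>
        if h : ∃ k, (z : ℕ → A) k ≠ (y : ℕ → A) k then Nat.find h else 0)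
      (Finset.mem_erase.mpr ⟨hzy, hz⟩)
    beta_reduce at hk
    rw [dif_pos hex] at hk
    have hlt : Nat.find hex < N := by omega
    have hkk := Nat.find_spec hex
    generalize hK : Nat.find hex = K at hkk hlt
    apply hkk
    rw [hw]
    simp only [hμ, wcat, preW, List.length_ofFn, dif_pos hlt, List.get_ofFn]
    exact List.get_ofFn _ _
  have hPv : Pop R X (Zcyl X μ) v = Finsupp.single y (v y) := by
    have happ : Pop R X (Zcyl X μ) v
        = ∑ z ∈ v.support, if (z : ℕ → A) ∈ Zcyl X μ then Finsupp.single z (v z) else 0 := by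
      rw [Pop, Finsupp.lsum_apply, Finsupp.sum]
      refine Finset.sum_congr rfl fun z _ => ?_
      split <;> simp
    rw [happ, Finset.sum_eq_single_of_mem y hy]
    · rw [if_pos hyZ]
    · intro z hz hzy; rw [if_neg (hsep z hz hzy)]
  have h1 : Finsupp.single y (v y) ∈ Y := by
    have := hP μ v hvY; rwa [hPv] at this
  have hvy : v y ≠ 0 := Finsupp.mem_support_iff.mp hy
  have hδ : Finsupp.single y (1 : R) ∈ Y := by
    have := Y.smul_mem (v y)⁻¹ h1
    rwa [Finsupp.smul_single, smul_eq_mul, inv_mul_cancel₀ hvy] at this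
  have hyx : tailEq (y : ℕ → A) x := hsupp y hy
  rw [Pclass, Submodule.span_le]
  rintro f ⟨z, hzx, rfl⟩
  obtain ⟨n, k, hnk⟩ := hyx
  obtain ⟨m, l, hml⟩ := hzx
  have heq : shiftN (y : ℕ → A) (n + l) = shiftN (z : ℕ → A) (m + k) := by
    rw [← shiftN_add, ← shiftN_add, hnk, hml, shiftN_add, shiftN_add, Nat.add_comm]
  have key := hS (preW (z : ℕ → A) (m + k)) (preW (y : ℕ → A) (n + l)) _ hδ
  rw [LinearMap.comp_apply] at key
  have hy2 : Finsupp.single y (1 : R) = Finsupp.single (⟨(y : ℕ → A), y.2⟩ : ↥X) 1 := rfl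
  rw [hy2, SstarWord_preW] at key
  have hmem : shiftN (z : ℕ → A) (m + k) ∈ X := heq ▸ shiftN_mem X hX y.2 (n + l)
  rw [single_congr R X heq (shiftN_mem X hX y.2 (n + l)) hmem,
    Sword_preW R X hX (m + k) (z : ℕ → A) z.2 hmem] at key
  exact key
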